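/- Let n ≥ 2, let v_0, …, v_{l'} be a symmetric filter of length l' (0 < l' ≤ ⌊(n−1)/4⌋), and let w = v ∗ v be its autoconvolution, a symmetric filter of length l = 2l'. For i = 1,…,n set λ_i^P = w_0 + 2∑_{j=1}^{l} w_j cos(2j(i−1)π/n). Then λ_1^P = 1, and 0 ≤ λ_i^P < 1 for every i ∈ {2,…,n}. Consequently every eigenvalue of the circulant matrix W^P built from w lies in [0,1]. -/

import Mathlib

open Finset

namespace Stmt10

noncomputable def F (v : ℕ → ℝ) (m : ℤ) : ℝ := v m.natAbs

noncomputable def Wf (l' : ℕ) (v : ℕ → ℝ) (d : ℤ) : ℝ :=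
  ∑ k ∈ Finset.Icc (-(l' : ℤ)) (l' : ℤ), F v k * F v (d - k)

noncomputable def P (n : ℕ) (v : ℕ → ℝ) (m : ℤ) : ℝ :=
  F v (m % (n : ℤ)) + F v (m % (n : ℤ) - n)

variable {n l' : ℕ} {v : ℕ → ℝ}

lemma F_even (m : ℤ) : F v (-m) = F v m := by simp [F]

lemma F_zero (hzero : ∀ k, l' < k → v k = 0) {m : ℤ} (h : l' < m.natAbs) : F v m = 0 :=
  hzero _ h

lemma F_nonneg (hpos : ∀ j, j ≤ l' → 0 < v j) (hzero : ∀ k, l' < k → v k = 0) (m : ℤ) :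
    0 ≤ F v m := by
  unfold F
  rcases le_or_gt m.natAbs l' with h | h
  · exact (hpos _ h).le
  · rw [hzero _ h]

/-- symmetric sum over `Icc (-M) M`. -/
lemma sum_sym (g : ℤ → ℝ) (hg : ∀ m, g (-m) = g m) (M : ℕ) :
    ∑ k ∈ Finset.Icc (-(M : ℤ)) (M : ℤ), g k = g 0 + 2 * ∑ j ∈ Finset.Icc 1 M, g (j : ℤ) := by
  induction M with
  | zero => simp
  | succ M ih =>
      have h1 : Finset.Icc (-(M + 1 : ℕ) : ℤ) ((M + 1 : ℕ) : ℤ) =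
          insert (-(M + 1 : ℤ)) (insert ((M + 1 : ℤ)) (Finset.Icc (-(M : ℤ)) (M : ℤ))) := by
        ext a; simp [Finset.mem_Icc]; omega
      have h2 : Finset.Icc 1 (M + 1) = insert (M + 1) (Finset.Icc 1 M) := by
        ext a; simp [Finset.mem_Icc]; omega
      rw [h1, Finset.sum_insert (by intro h; simp only [Finset.mem_insert, Finset.mem_Icc] at h; omega),
        Finset.sum_insert (by intro h; simp only [Finset.mem_Icc] at h; omega), ih, h2,
        Finset.sum_insert (by intro h; simp at h)]
      have hgg : g (-(M + 1 : ℤ)) = g ((M + 1 : ℤ)) := hg _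
      push_cast
      push_cast at hgg
      rw [hgg]
      ring

/-- reindex by negation -/
lemma sum_neg (g : ℤ → ℝ) (M : ℕ) :
    ∑ k ∈ Finset.Icc (-(M : ℤ)) (M : ℤ), g (-k) = ∑ k ∈ Finset.Icc (-(M : ℤ)) (M : ℤ), g k := by
  apply Finset.sum_nbij' (fun k => -k) (fun k => -k) <;>
    simp [Finset.mem_Icc] <;> omega

lemma Wf_even (d : ℤ) : Wf l' v (-d) = Wf l' v d := by
  unfold Wf
  rw [← sum_neg (fun k => F v k * F v (d - k)) l']
  apply Finset.sum_congr rfl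
  intro k _
  have h1 : -d - k = -(d + k) := by ring
  have h2 : d - -k = d + k := by ring
  rw [h1, h2, F_even, F_even]

lemma Wf_nonneg (hpos : ∀ j, j ≤ l' → 0 < v j) (hzero : ∀ k, l' < k → v k = 0) (d : ℤ) :
    0 ≤ Wf l' v d :=
  Finset.sum_nonneg fun k _ => mul_nonneg (F_nonneg hpos hzero k) (F_nonneg hpos hzero _)

lemma Wf_zero (hzero : ∀ k, l' < k → v k = 0) {d : ℤ} (h : 2 * l' < d.natAbs) :
    Wf l' v d = 0 := by
  apply Finset.sum_eq_zero
  intro k hk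
  simp only [Finset.mem_Icc] at hk
  have : F v (d - k) = 0 := F_zero hzero (by omega)
  rw [this, mul_zero]

/-- shift a sum of `F v (d - k) * g d` over a big interval -/
lemma sum_shift (hzero : ∀ k, l' < k → v k = 0) (g : ℤ → ℝ) {k : ℤ}
    (hk : k ∈ Finset.Icc (-(l' : ℤ)) (l' : ℤ)) :
    ∑ d ∈ Finset.Icc (-(2 * l' : ℤ)) (2 * l' : ℤ), F v (d - k) * g d
      = ∑ e ∈ Finset.Icc (-(l' : ℤ)) (l' : ℤ), F v e * g (e + k) := by
  simp only [Finset.mem_Icc] at hk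
  rw [← Finset.sum_subset (s₁ := Finset.map (addRightEmbedding k)
      (Finset.Icc (-(l' : ℤ)) (l' : ℤ)))]
  · rw [Finset.sum_map]
    apply Finset.sum_congr rfl
    intro e _
    simp [addRightEmbedding]
  · rw [Finset.map_add_right_Icc]
    intro a ha
    simp only [Finset.mem_Icc] at ha ⊢
    omega
  · intro d _ hd
    rw [Finset.map_add_right_Icc] at hd
    simp only [Finset.mem_Icc] at hd
    rw [F_zero hzero (by omega), zero_mul]

lemma F_sum (hsum : v 0 + 2 * ∑ j ∈ Finset.Icc 1 l', v j = 1) :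
    ∑ k ∈ Finset.Icc (-(l' : ℤ)) (l' : ℤ), F v k = 1 := by
  rw [sum_sym (F v) F_even l']
  have : ∀ j ∈ Finset.Icc 1 l', F v (j : ℤ) = v j := by
    intro j _; simp [F]
  rw [Finset.sum_congr rfl this]
  exact hsum

lemma w_eq {w : ℕ → ℝ} (hzero : ∀ k, l' < k → v k = 0)
    (hw : ∀ j : ℕ, w j = ∑' k : ℤ, v k.natAbs * v ((j : ℤ) - k).natAbs) (j : ℕ) :
    w j = Wf l' v (j : ℤ) := by
  rw [hw j]
  exact tsum_eq_sum (fun k hk => by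
    have : l' < k.natAbs := by
      simp only [Finset.mem_Icc] at hk; omega
    rw [show v k.natAbs = F v k from rfl, F_zero hzero this, zero_mul])

/-- a sum of `Wf` against a weight expands as a double sum -/
lemma Wf_expand (hzero : ∀ k, l' < k → v k = 0) (g : ℤ → ℝ) :
    ∑ d ∈ Finset.Icc (-(2 * l' : ℤ)) (2 * l' : ℤ), Wf l' v d * g d
      = ∑ k ∈ Finset.Icc (-(l' : ℤ)) (l' : ℤ), ∑ e ∈ Finset.Icc (-(l' : ℤ)) (l' : ℤ),
          F v k * (F v e * g (e + k)) := by
  unfold Wf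
  calc ∑ d ∈ Finset.Icc (-(2 * l' : ℤ)) (2 * l' : ℤ),
        (∑ k ∈ Finset.Icc (-(l' : ℤ)) (l' : ℤ), F v k * F v (d - k)) * g d
      = ∑ d ∈ Finset.Icc (-(2 * l' : ℤ)) (2 * l' : ℤ),
          ∑ k ∈ Finset.Icc (-(l' : ℤ)) (l' : ℤ), F v k * (F v (d - k) * g d) := by
        apply Finset.sum_congr rfl
        intro d _
        rw [Finset.sum_mul]
        apply Finset.sum_congr rfl
        intro k _
        ring
    _ = ∑ k ∈ Finset.Icc (-(l' : ℤ)) (l' : ℤ),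
          ∑ d ∈ Finset.Icc (-(2 * l' : ℤ)) (2 * l' : ℤ), F v k * (F v (d - k) * g d) :=
        Finset.sum_comm
    _ = ∑ k ∈ Finset.Icc (-(l' : ℤ)) (l' : ℤ), ∑ e ∈ Finset.Icc (-(l' : ℤ)) (l' : ℤ),
          F v k * (F v e * g (e + k)) := by
        apply Finset.sum_congr rfl
        intro k hk
        rw [← Finset.mul_sum, ← Finset.mul_sum, sum_shift hzero g hk]

lemma Wf_sum (hzero : ∀ k, l' < k → v k = 0)
    (hsum : v 0 + 2 * ∑ j ∈ Finset.Icc 1 l', v j = 1) :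
    ∑ d ∈ Finset.Icc (-(2 * l' : ℤ)) (2 * l' : ℤ), Wf l' v d = 1 := by
  have := Wf_expand (v := v) hzero (fun _ => 1)
  simp only [mul_one] at this
  rw [this]
  have : ∀ k ∈ Finset.Icc (-(l' : ℤ)) (l' : ℤ),
      ∑ e ∈ Finset.Icc (-(l' : ℤ)) (l' : ℤ), F v k * F v e = F v k := by
    intro k _
    rw [← Finset.mul_sum, F_sum hsum, mul_one]
  rw [Finset.sum_congr rfl this, F_sum hsum]

lemma Wf_cos (hzero : ∀ k, l' < k → v k = 0) (x : ℝ) :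
    ∑ d ∈ Finset.Icc (-(2 * l' : ℤ)) (2 * l' : ℤ), Wf l' v d * Real.cos (d * x)
      = (∑ k ∈ Finset.Icc (-(l' : ℤ)) (l' : ℤ), F v k * Real.cos (k * x)) ^ 2 := by
  rw [Wf_expand hzero (fun d => Real.cos (d * x))]
  have key : ∀ k ∈ Finset.Icc (-(l' : ℤ)) (l' : ℤ), ∀ e ∈ Finset.Icc (-(l' : ℤ)) (l' : ℤ),
      F v k * (F v e * Real.cos ((e + k : ℤ) * x)) =
        (F v k * Real.cos (k * x)) * (F v e * Real.cos (e * x))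
        - (F v k * Real.sin (k * x)) * (F v e * Real.sin (e * x)) := by
    intro k _ e _
    have : ((e + k : ℤ) : ℝ) * x = (e : ℝ) * x + (k : ℝ) * x := by push_cast; ring
    rw [this, Real.cos_add]
    ring
  rw [Finset.sum_congr rfl (fun k hk => Finset.sum_congr rfl (fun e he => key k hk e he))]
  have hs : ∑ k ∈ Finset.Icc (-(l' : ℤ)) (l' : ℤ), F v k * Real.sin (k * x) = 0 := by
    have h1 := sum_neg (fun k => F v k * Real.sin ((k : ℝ) * x)) l'
    simp only [F_even, Int.cast_neg, neg_mul, Real.sin_neg, mul_neg] at h1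
    rw [Finset.sum_neg_distrib] at h1
    linarith
  have step : ∀ k ∈ Finset.Icc (-(l' : ℤ)) (l' : ℤ),
      ∑ e ∈ Finset.Icc (-(l' : ℤ)) (l' : ℤ),
        ((F v k * Real.cos (k * x)) * (F v e * Real.cos (e * x))
          - (F v k * Real.sin (k * x)) * (F v e * Real.sin (e * x)))
      = (F v k * Real.cos (k * x)) *
          (∑ e ∈ Finset.Icc (-(l' : ℤ)) (l' : ℤ), F v e * Real.cos (e * x)) := by
    intro k _
    rw [Finset.sum_sub_distrib, ← Finset.mul_sum, ← Finset.mul_sum, hs, mul_zero, sub_zero]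
  rw [Finset.sum_congr rfl step, ← Finset.sum_mul, sq]

variable {n : ℕ}

lemma P_congr {a b : ℤ} (h : a % (n : ℤ) = b % (n : ℤ)) : P n v a = P n v b := by
  unfold P; rw [h]

lemma P_sub_period (m : ℤ) : P n v (m - n) = P n v m := by
  apply P_congr
  rw [show m - (n : ℤ) = m + (-1) * n by ring, Int.add_mul_emod_self_right]

lemma P_even (hn : 0 < n) (m : ℤ) : P n v (-m) = P n v m := by
  have hr0 : 0 ≤ m % (n : ℤ) := Int.emod_nonneg m (by exact_mod_cast hn.ne')
  have hrn : m % (n : ℤ) < n := Int.emod_lt_of_pos m (by exact_mod_cast hn)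
  have hd : m % (n : ℤ) = m - (n : ℤ) * (m / (n : ℤ)) := Int.emod_def m n
  have key : (-m) % (n : ℤ) = ((n : ℤ) - m % n) % n := by
    rw [show -m = ((n : ℤ) - m % n) + (-(m / (n : ℤ)) - 1) * n by rw [hd]; ring,
      Int.add_mul_emod_self_right]
  unfold P
  set r := m % (n : ℤ) with hrdef
  clear_value r
  rcases eq_or_lt_of_le hr0 with h0 | h0
  · have h1 : (-m) % (n : ℤ) = 0 := by
      rw [key, ← h0, sub_zero, Int.emod_self]
    rw [h1, ← h0]
  · have h1 : (-m) % (n : ℤ) = (n : ℤ) - r := by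
      rw [key]; exact Int.emod_eq_of_lt (by omega) (by omega)
    rw [h1, show (n : ℤ) - r = -(r - n) by ring, F_even,
      show -(r - (n : ℤ)) - n = -r by ring, F_even]
    ring

lemma P_nonneg (hpos : ∀ j, j ≤ l' → 0 < v j) (hzero : ∀ k, l' < k → v k = 0) (m : ℤ) :
    0 ≤ P n v m := add_nonneg (F_nonneg hpos hzero _) (F_nonneg hpos hzero _)

lemma P_on_range (hn : 0 < n) {t : ℤ} (h0 : 0 ≤ t) (h1 : t < n) :
    P n v t = F v t + F v (t - n) := by
  unfold P
  rw [Int.emod_eq_of_lt h0 h1]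

lemma P_shift (hn4 : 4 * l' + 1 ≤ n) (hzero : ∀ k, l' < k → v k = 0)
    {t : ℤ} (ht : t.natAbs ≤ l') (d : ℤ) :
    P n v (d - t) = F v (d % n - t) + F v (d % n - t - n) := by
  have hn : (0 : ℤ) < n := by exact_mod_cast Nat.lt_of_lt_of_le (by omega) hn4
  have hr0 : 0 ≤ d % (n : ℤ) := Int.emod_nonneg d (by omega)
  have hrn : d % (n : ℤ) < n := Int.emod_lt_of_pos d hn
  have hmod : (d - t) % (n : ℤ) = (d % (n : ℤ) - t) % n := by
    rw [Int.sub_emod d t n, Int.sub_emod (d % (n : ℤ)) t n, Int.emod_emod_of_dvd d dvd_rfl]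
  unfold P
  set r := d % (n : ℤ) with hrdef
  clear_value r
  rcases lt_trichotomy (r - t) 0 with hc | hc | hc
  · have hs : (d - t) % (n : ℤ) = r - t + n := by
      rw [hmod]
      conv_lhs => rw [show r - t = (r - t + n) + (-1) * n by ring]
      rw [Int.add_mul_emod_self_right]
      exact Int.emod_eq_of_lt (by omega) (by omega)
    have hz1 : F v (r - t + (n : ℤ)) = 0 := F_zero hzero (by omega)
    have hz2 : F v (r - t - (n : ℤ)) = 0 := F_zero hzero (by omega)
    rw [hs, show r - t + (n : ℤ) - n = r - t by ring, hz1, hz2]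
    ring
  · have hs : (d - t) % (n : ℤ) = r - t := by
      rw [hmod]; exact Int.emod_eq_of_lt (by omega) (by omega)
    rw [hs]
  · rcases lt_or_ge (r - t) n with hc2 | hc2
    · have hs : (d - t) % (n : ℤ) = r - t := by
        rw [hmod]; exact Int.emod_eq_of_lt (by omega) (by omega)
      rw [hs]
    · have hs : (d - t) % (n : ℤ) = r - t - n := by
        rw [hmod]
        conv_lhs => rw [show r - t = (r - t - n) + 1 * n by ring]
        rw [Int.add_mul_emod_self_right]
        exact Int.emod_eq_of_lt (by omega) (by omega)
      have hz1 : F v (r - t) = 0 := F_zero hzero (by omega)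
      have hz2 : F v (r - t - (n : ℤ) - (n : ℤ)) = 0 := F_zero hzero (by omega)
      rw [hs, hz1, hz2]
      ring

lemma image_range_cast (n : ℕ) :
    (Finset.range n).image (Nat.cast : ℕ → ℤ) = Finset.Icc (0 : ℤ) ((n : ℤ) - 1) := by
  ext a
  simp only [Finset.mem_image, Finset.mem_range, Finset.mem_Icc]
  constructor
  · rintro ⟨x, hx, rfl⟩; omega
  · intro h; exact ⟨a.toNat, by omega, by omega⟩

lemma image_range_cast_sub (n : ℕ) :
    (Finset.range n).image (fun t : ℕ => (t : ℤ) - n) = Finset.Icc (-(n : ℤ)) (-1) := by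
  ext a
  simp only [Finset.mem_image, Finset.mem_range, Finset.mem_Icc]
  constructor
  · rintro ⟨x, hx, rfl⟩; omega
  · intro h; exact ⟨(a + n).toNat, by omega, by omega⟩

lemma range_split (hn : 0 < n) (g h : ℤ → ℝ) (hper : ∀ m : ℤ, h (m + n) = h m)
    (B : ℕ) (hB : B < n) (hg : ∀ m : ℤ, B < m.natAbs → g m = 0) :
    ∑ t ∈ Finset.range n, h t * (g t + g ((t : ℤ) - n))
      = ∑ t ∈ Finset.Icc (-(B : ℤ)) (B : ℤ), h t * g t := by
  have S1a : ∑ a ∈ Finset.Icc (0 : ℤ) ((n : ℤ) - 1), h a * g a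
      = ∑ t ∈ Finset.range n, h t * g t := by
    rw [← image_range_cast n, Finset.sum_image (fun a _ b _ hab => by exact_mod_cast hab)]
  have S1 : ∑ t ∈ Finset.range n, h t * g t
      = ∑ t ∈ Finset.Icc (0 : ℤ) ((B : ℤ)), h t * g t := by
    rw [← S1a]
    refine (Finset.sum_subset (fun a ha => ?_) (fun a ha ha' => ?_)).symm
    · simp only [Finset.mem_Icc] at ha ⊢; omega
    · simp only [Finset.mem_Icc] at ha ha'
      rw [hg a (by omega), mul_zero]
  have S2a : ∑ a ∈ Finset.Icc (-(n : ℤ)) (-1 : ℤ), h a * g a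
      = ∑ t ∈ Finset.range n, h ((t : ℤ) - n) * g ((t : ℤ) - n) := by
    rw [← image_range_cast_sub n, Finset.sum_image (fun a _ b _ hab => by omega)]
  have S2 : ∑ t ∈ Finset.range n, h t * g ((t : ℤ) - n)
      = ∑ t ∈ Finset.Icc (-(B : ℤ)) (-1 : ℤ), h t * g t := by
    have e1 : ∀ t ∈ Finset.range n, h t * g ((t : ℤ) - n)
        = h ((t : ℤ) - n) * g ((t : ℤ) - n) := by
      intro t _
      rw [show (h (t : ℤ) : ℝ) = h ((t : ℤ) - n + n) by norm_num, hper ((t : ℤ) - n)]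
    rw [Finset.sum_congr rfl e1, ← S2a]
    refine (Finset.sum_subset (fun a ha => ?_) (fun a ha ha' => ?_)).symm
    · simp only [Finset.mem_Icc] at ha ⊢; omega
    · simp only [Finset.mem_Icc] at ha ha'
      rw [hg a (by omega), mul_zero]
  have hsplit : Finset.Icc (-(B : ℤ)) (B : ℤ)
      = Finset.Icc (-(B : ℤ)) (-1 : ℤ) ∪ Finset.Icc (0 : ℤ) (B : ℤ) := by
    ext a; simp only [Finset.mem_Icc, Finset.mem_union]; omega
  have hdisj : Disjoint (Finset.Icc (-(B : ℤ)) (-1 : ℤ)) (Finset.Icc (0 : ℤ) (B : ℤ)) := by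
    rw [Finset.disjoint_left]
    intro a ha ha'
    simp only [Finset.mem_Icc] at ha ha'
    omega
  calc ∑ t ∈ Finset.range n, h t * (g t + g ((t : ℤ) - n))
      = ∑ t ∈ Finset.range n, h t * g t + ∑ t ∈ Finset.range n, h t * g ((t : ℤ) - n) := by
        rw [← Finset.sum_add_distrib]
        apply Finset.sum_congr rfl
        intro t _
        ring
    _ = ∑ t ∈ Finset.Icc (-(B : ℤ)) (B : ℤ), h t * g t := by
        rw [S1, S2, hsplit, Finset.sum_union hdisj]
        ring

lemma conv_eq (hn4 : 4 * l' + 1 ≤ n) (hzero : ∀ k, l' < k → v k = 0) (d : ℤ) :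
    ∑ t ∈ Finset.range n, P n v (d - t) * P n v t
      = Wf l' v (d % n) + Wf l' v (d % n - n) := by
  have hn : 0 < n := by omega
  have step0 : ∀ t ∈ Finset.range n,
      P n v (d - t) * P n v t = P n v (d - t) * (F v t + F v ((t : ℤ) - n)) := by
    intro t ht
    simp only [Finset.mem_range] at ht
    rw [P_on_range (t := (t : ℤ)) hn (by omega) (by exact_mod_cast ht)]
  rw [Finset.sum_congr rfl step0]
  rw [range_split hn (F v) (fun s => P n v (d - s))
    (fun m => by
      show P n v (d - (m + (n : ℤ))) = P n v (d - m)
      rw [show d - (m + (n : ℤ)) = (d - m) - n by ring, P_sub_period])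
    l' (by omega) (fun m hm => F_zero hzero hm)]
  have step2 : ∀ t ∈ Finset.Icc (-(l' : ℤ)) (l' : ℤ),
      P n v (d - t) * F v t
        = F v t * F v (d % n - t) + F v t * F v ((d % n - (n : ℤ)) - t) := by
    intro t ht
    simp only [Finset.mem_Icc] at ht
    rw [P_shift hn4 hzero (t := t) (by omega) d,
      show d % (n : ℤ) - (n : ℤ) - t = d % (n : ℤ) - t - (n : ℤ) by ring]
    ring
  rw [Finset.sum_congr rfl step2, Finset.sum_add_distrib]
  rfl

lemma Qsum (hn4 : 4 * l' + 1 ≤ n) (hzero : ∀ k, l' < k → v k = 0)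
    (hsum : v 0 + 2 * ∑ j ∈ Finset.Icc 1 l', v j = 1) :
    ∑ t ∈ Finset.range n, (Wf l' v t + Wf l' v ((t : ℤ) - n)) = 1 := by
  have hn : 0 < n := by omega
  have h1 : ∀ t ∈ Finset.range n, (Wf l' v t + Wf l' v ((t : ℤ) - n))
      = (1 : ℝ) * (Wf l' v t + Wf l' v ((t : ℤ) - n)) := by
    intro t _; ring
  rw [Finset.sum_congr rfl h1,
    range_split hn (Wf l' v) (fun _ => (1 : ℝ)) (fun _ => rfl) (2 * l') (by omega)
      (fun m hm => Wf_zero hzero hm)]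
  simp only [one_mul]
  exact Wf_sum hzero hsum

lemma fin_sub_val (hn : 0 < n) (i j : Fin n) :
    (((i - j : Fin n) : ℕ) : ℤ) = ((i.val : ℤ) - (j.val : ℤ)) % n := by
  have hj := j.isLt
  have hi := i.isLt
  rw [Fin.sub_def]
  simp only
  rw [Int.natCast_mod]
  have h1 : ((n - j.val + i.val : ℕ) : ℤ) = ((i.val : ℤ) - j.val) + 1 * n := by
    push_cast [Nat.cast_sub hj.le]
    ring
  rw [h1, Int.add_mul_emod_self_right]

lemma W_entry (hn4 : 4 * l' + 1 ≤ n) (hzero : ∀ k, l' < k → v k = 0) {w : ℕ → ℝ}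
    (hw : ∀ j : ℕ, w j = ∑' k : ℤ, v k.natAbs * v ((j : ℤ) - k).natAbs) (i j : Fin n) :
    w ((i.val : ℤ) - (j.val : ℤ)).natAbs + w (n - ((i.val : ℤ) - (j.val : ℤ)).natAbs)
      = Wf l' v (((i.val : ℤ) - (j.val : ℤ)) % n)
        + Wf l' v ((((i.val : ℤ) - (j.val : ℤ)) % n) - n) := by
  have hi := i.isLt
  have hj := j.isLt
  set d : ℤ := (i.val : ℤ) - (j.val : ℤ) with hd
  rcases le_or_gt (j.val : ℤ) (i.val : ℤ) with hc | hc
  · have h1 : d % (n : ℤ) = d := Int.emod_eq_of_lt (by omega) (by omega)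
    have h2 : (d.natAbs : ℤ) = d := by omega
    have h3 : ((n - d.natAbs : ℕ) : ℤ) = -(d - n) := by omega
    rw [h1, w_eq hzero hw, w_eq hzero hw, h2, h3, Wf_even]
  · have h1 : d % (n : ℤ) = d + n := by
      conv_lhs => rw [show d = (d + n) + (-1) * n by ring]
      rw [Int.add_mul_emod_self_right]
      exact Int.emod_eq_of_lt (by omega) (by omega)
    have h2 : ((n - d.natAbs : ℕ) : ℤ) = d + n := by omega
    have h3 : ((d.natAbs : ℕ) : ℤ) = -(d + n - n) := by omega
    rw [h1, w_eq hzero hw, w_eq hzero hw, h2, h3, Wf_even]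
    ring

end Stmt10

open Stmt10 Finset in
/-- For `w = v ∗ v` the autoconvolution of a symmetric filter `v`
of length `l' ≤ ⌊(n-1)/4⌋` (a symmetric filter of length `l = 2l'`), the numbers
`λ_i^P = w_0 + 2 ∑_{j=1}^{l} w_j cos(2 j (i-1) π/n)` satisfy `λ_1^P = 1` and
`0 ≤ λ_i^P < 1` for `i = 2,…,n`; consequently every eigenvalue of the circulant
matrix `W^P` built from `w` lies in `[0,1]`. (0-based: `i.val = i - 1`.) -/
theorem stmt_10 (n l' : ℕ) (hn : 2 ≤ n) (v : ℕ → ℝ)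
    (hl' : 0 < l') (hl'n : l' ≤ (n - 1) / 4)
    (hpos : ∀ j, j ≤ l' → 0 < v j)
    (hzero : ∀ k, l' < k → v k = 0)
    (hsum : v 0 + 2 * ∑ j ∈ Finset.Icc 1 l', v j = 1)
    (w : ℕ → ℝ)
    (hw : ∀ j : ℕ, w j = ∑' k : ℤ, v k.natAbs * v ((j : ℤ) - k).natAbs)
    (lam : Fin n → ℝ)
    (hlam : ∀ i : Fin n, lam i = w 0 + 2 * ∑ j ∈ Finset.Icc 1 (2 * l'),
      w j * Real.cos (2 * (j : ℝ) * (i.val : ℝ) * Real.pi / (n : ℝ)))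
    (W : Matrix (Fin n) (Fin n) ℝ)
    (hW : ∀ i j : Fin n, W i j =
      w ((i.val : ℤ) - (j.val : ℤ)).natAbs + w (n - ((i.val : ℤ) - (j.val : ℤ)).natAbs)) :
    (∀ i : Fin n, i.val = 0 → lam i = 1) ∧
    (∀ i : Fin n, 1 ≤ i.val → 0 ≤ lam i ∧ lam i < 1) ∧
    (∀ μ : ℂ, μ ∈ spectrum ℂ (W.map (fun x : ℝ => (x : ℂ))) →
      μ.im = 0 ∧ 0 ≤ μ.re ∧ μ.re ≤ 1) := by
  have hn4 : 4 * l' + 1 ≤ n := by omega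
  have hn0 : 0 < n := by omega
  -- the symbol of the filter
  set c : Fin n → ℝ := fun i => ∑ k ∈ Finset.Icc (-(l' : ℤ)) (l' : ℤ),
    F v k * Real.cos (k * (2 * Real.pi * i.val / n)) with hc
  -- λ_i as a symmetric Wf-sum
  have lam_sym : ∀ i : Fin n, lam i = ∑ d ∈ Finset.Icc (-((2 * l' : ℕ) : ℤ)) ((2 * l' : ℕ) : ℤ),
      Wf l' v d * Real.cos (d * (2 * Real.pi * i.val / n)) := by
    intro i
    rw [sum_sym (fun d => Wf l' v d * Real.cos (d * (2 * Real.pi * i.val / n)))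
      (fun m => by
        push_cast
        rw [Wf_even, neg_mul, Real.cos_neg]) (2 * l')]
    rw [hlam i]
    have h0 : Wf l' v 0 * Real.cos ((0 : ℤ) * (2 * Real.pi * i.val / n)) = w 0 := by
      rw [w_eq hzero hw 0]
      push_cast
      rw [zero_mul, Real.cos_zero, mul_one]
    rw [h0]
    congr 1
    congr 1
    apply Finset.sum_congr rfl
    intro j hj
    rw [w_eq hzero hw j]
    congr 1
    congr 1
    push_cast
    ring
  -- λ_i = c_i ^ 2
  have lam_sq : ∀ i : Fin n, lam i = (c i) ^ 2 := by
    intro i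
    rw [lam_sym i, hc]
    have := Wf_cos (l' := l') (v := v) hzero (2 * Real.pi * i.val / n)
    push_cast at this ⊢
    exact this
  have hFsum := F_sum (l' := l') (v := v) hsum
  -- Part 1
  have part1 : ∀ i : Fin n, i.val = 0 → lam i = 1 := by
    intro i hi
    rw [lam_sq i, hc]
    simp only [hi]
    have : ∀ k ∈ Finset.Icc (-(l' : ℤ)) (l' : ℤ),
        F v k * Real.cos (k * (2 * Real.pi * (0 : ℕ) / n)) = F v k := by
      intro k _
      norm_num
    rw [Finset.sum_congr rfl this, hFsum]
    norm_num
  -- Part 2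
  have part2 : ∀ i : Fin n, 1 ≤ i.val → 0 ≤ lam i ∧ lam i < 1 := by
    intro i hi
    set x : ℝ := 2 * Real.pi * i.val / n with hx
    have hxpos : 0 < x := by
      apply div_pos _ (by exact_mod_cast hn0)
      have : (0 : ℝ) < (i.val : ℝ) := by exact_mod_cast hi
      positivity
    have hxlt : x < 2 * Real.pi := by
      rw [hx, div_lt_iff₀ (by exact_mod_cast hn0)]
      have h1 : (i.val : ℝ) < n := by exact_mod_cast i.isLt
      have := Real.two_pi_pos
      nlinarith
    have hcos : Real.cos x < 1 := by
      rcases lt_or_eq_of_le (Real.cos_le_one x) with h | h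
      · exact h
      · exfalso
        have := (Real.cos_eq_one_iff_of_lt_of_lt (by linarith) hxlt).mp h
        linarith
    have hclt : c i < 1 := by
      rw [hc]
      simp only
      rw [← hx, ← hFsum]
      apply Finset.sum_lt_sum
      · intro k hk
        calc F v k * Real.cos (k * x) ≤ F v k * 1 := by
              apply mul_le_mul_of_nonneg_left (Real.cos_le_one _)
                (F_nonneg hpos hzero k)
          _ = F v k := mul_one _
      · refine ⟨1, by simp [Finset.mem_Icc]; omega, ?_⟩
        have h1 : F v 1 = v 1 := rfl
        have hv1 : 0 < v 1 := hpos 1 hl'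
        calc F v (1 : ℤ) * Real.cos ((1 : ℤ) * x) = v 1 * Real.cos x := by
              push_cast; rw [one_mul, h1]
          _ < v 1 * 1 := by exact mul_lt_mul_of_pos_left hcos hv1
          _ = F v 1 := by rw [mul_one, h1]
    have hcgt : -1 < c i := by
      have hlhs : (-1 : ℝ) = ∑ k ∈ Finset.Icc (-(l' : ℤ)) (l' : ℤ), -(F v k) := by
        rw [Finset.sum_neg_distrib, hFsum]
      rw [hc]
      simp only
      rw [← hx, hlhs]
      apply Finset.sum_lt_sum
      · intro k hk
        have h1 := Real.neg_one_le_cos (k * x)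
        have h2 := F_nonneg (v := v) hpos hzero k
        nlinarith
      · refine ⟨0, by simp [Finset.mem_Icc], ?_⟩
        have hv0 : 0 < v 0 := hpos 0 (by omega)
        have h1 : F v (0 : ℤ) = v 0 := rfl
        push_cast
        rw [zero_mul, Real.cos_zero, h1, mul_one]
        linarith
    constructor
    · rw [lam_sq i]; positivity
    · rw [lam_sq i, sq_lt_one_iff_abs_lt_one, abs_lt]
      exact ⟨hcgt, hclt⟩
  refine ⟨part1, part2, ?_⟩
  intro μ hμ
  haveI : NeZero n := ⟨by omega⟩
  set Mc := W.map (fun x : ℝ => (x : ℂ)) with hMcdef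
  -- nonnegativity of w
  have hwnn : ∀ m : ℕ, 0 ≤ w m := fun m =>
    (w_eq hzero hw m) ▸ Wf_nonneg hpos hzero (m : ℤ)
  have hWnn : ∀ i j : Fin n, 0 ≤ W i j := by
    intro i j
    rw [hW i j]
    exact add_nonneg (hwnn _) (hwnn _)
  -- eigenvector
  have h1 : ¬IsUnit (algebraMap ℂ (Matrix (Fin n) (Fin n) ℂ) μ - Mc) := spectrum.mem_iff.mp hμ
  have hdet : (algebraMap ℂ (Matrix (Fin n) (Fin n) ℂ) μ - Mc).det = 0 := by
    by_contra h
    exact h1 ((Matrix.isUnit_iff_isUnit_det _).mpr (isUnit_iff_ne_zero.mpr h))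
  obtain ⟨x, hx0, hxe⟩ := Matrix.exists_mulVec_eq_zero_iff.mpr hdet
  have heig : Mc.mulVec x = μ • x := by
    rw [Algebra.algebraMap_eq_smul_one, Matrix.sub_mulVec, Matrix.smul_mulVec,
      Matrix.one_mulVec, sub_eq_zero] at hxe
    exact hxe.symm
  -- the real square root of W
  set V : Matrix (Fin n) (Fin n) ℝ :=
    Matrix.of (fun i j : Fin n => P n v ((i.val : ℤ) - (j.val : ℤ))) with hVdef
  have hVapp : ∀ a b : Fin n, V a b = P n v ((a.val : ℤ) - (b.val : ℤ)) := fun a b => rfl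
  have hVsymm : ∀ a b : Fin n, V a b = V b a := by
    intro a b
    rw [hVapp, hVapp, ← P_even hn0, neg_sub]
  have hWV : W = V * V := by
    ext i j
    rw [hW i j, W_entry hn4 hzero hw i j, ← conv_eq hn4 hzero ((i.val : ℤ) - (j.val : ℤ)),
      Matrix.mul_apply,
      ← Fin.sum_univ_eq_sum_range
        (fun t => P n v (((i.val : ℤ) - (j.val : ℤ)) - t) * P n v t) n,
      ← Equiv.sum_comp (Equiv.addRight j) (fun k => V i k * V k j)]
    apply Finset.sum_congr rfl
    intro k _
    simp only [Equiv.coe_addRight]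
    rw [hVapp, hVapp]
    have hval : (((k + j : Fin n) : ℕ) : ℤ) = ((k.val : ℤ) + (j.val : ℤ)) % n := by
      rw [Fin.val_add, Int.natCast_mod]
      push_cast
      rfl
    have e1 : P n v ((i.val : ℤ) - ((k + j : Fin n) : ℕ))
        = P n v ((((i.val : ℤ) - (j.val : ℤ))) - (k.val : ℤ)) := by
      apply P_congr
      rw [hval, Int.sub_emod ((i.val : ℤ)) _ (n : ℤ), Int.emod_emod_of_dvd _ dvd_rfl,
        ← Int.sub_emod,
        show (i.val : ℤ) - ((k.val : ℤ) + (j.val : ℤ))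
          = ((i.val : ℤ) - (j.val : ℤ)) - (k.val : ℤ) by ring]
    have e2 : P n v (((k + j : Fin n) : ℕ) - (j.val : ℤ)) = P n v ((k.val : ℤ)) := by
      apply P_congr
      rw [hval, Int.sub_emod _ ((j.val : ℤ)) (n : ℤ), Int.emod_emod_of_dvd _ dvd_rfl,
        ← Int.sub_emod, add_sub_cancel_right]
    rw [e1, e2]
  -- row sums of W are 1
  have rowsum : ∀ i : Fin n, ∑ j, W i j = 1 := by
    intro i
    have e1 : ∀ j : Fin n, W i j =
        (fun k : Fin n => Wf l' v ((k.val : ℕ) : ℤ) + Wf l' v (((k.val : ℕ) : ℤ) - n))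
          ((Equiv.subLeft i) j) := by
      intro j
      simp only [Equiv.subLeft_apply]
      rw [hW i j, W_entry hn4 hzero hw i j, ← fin_sub_val hn0 i j]
    rw [Finset.sum_congr rfl (fun j _ => e1 j),
      Equiv.sum_comp (Equiv.subLeft i)
        (fun k : Fin n => Wf l' v ((k.val : ℕ) : ℤ) + Wf l' v (((k.val : ℕ) : ℤ) - n)),
      Fin.sum_univ_eq_sum_range (fun t => Wf l' v (t : ℤ) + Wf l' v ((t : ℤ) - n)) n]
    exact Qsum hn4 hzero hsum
  -- complex versions
  set Vc : Matrix (Fin n) (Fin n) ℂ := V.map (fun x : ℝ => (x : ℂ)) with hVcdef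
  have hMcV : Mc = Vc * Vc := by
    have hco : (fun x : ℝ => (x : ℂ)) = ⇑Complex.ofRealHom := rfl
    rw [hMcdef, hVcdef, hWV, hco]
    exact Matrix.map_mul
  have hex : ∃ j, x j ≠ 0 := by
    by_contra h
    push_neg at h
    exact hx0 (funext h)
  set S : ℝ := ∑ j, Complex.normSq (x j) with hS
  have hSpos : 0 < S := by
    obtain ⟨j0, hj0⟩ := hex
    exact Finset.sum_pos' (fun j _ => Complex.normSq_nonneg _)
      ⟨j0, Finset.mem_univ _, Complex.normSq_pos.mpr hj0⟩
  set y : Fin n → ℂ := Vc.mulVec x with hy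
  set T : ℝ := ∑ j, Complex.normSq (y j) with hT
  have hTnn : 0 ≤ T := Finset.sum_nonneg fun j _ => Complex.normSq_nonneg _
  have hdx : dotProduct (star x) x = (S : ℂ) := by
    rw [hS]
    push_cast
    simp only [dotProduct, Pi.star_apply, Complex.star_def]
    apply Finset.sum_congr rfl
    intro j _
    rw [mul_comm, Complex.mul_conj]
  have hdy : dotProduct (star y) y = (T : ℂ) := by
    rw [hT]
    push_cast
    simp only [dotProduct, Pi.star_apply, Complex.star_def]
    apply Finset.sum_congr rfl
    intro j _
    rw [mul_comm, Complex.mul_conj]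
  have hVcreal : ∀ a b : Fin n, star (Vc a b) = Vc a b := by
    intro a b
    show star ((V a b : ℝ) : ℂ) = ((V a b : ℝ) : ℂ)
    rw [Complex.star_def, Complex.conj_ofReal]
  have hVcsymm : ∀ a b : Fin n, Vc a b = Vc b a := by
    intro a b
    show ((V a b : ℝ) : ℂ) = ((V b a : ℝ) : ℂ)
    rw [hVsymm a b]
  have hmain : dotProduct (star x) (Mc.mulVec x) = dotProduct (star y) y := by
    rw [hMcV, ← Matrix.mulVec_mulVec, ← hy, Matrix.dotProduct_mulVec]
    congr 1
    funext j
    rw [hy]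
    simp only [Matrix.vecMul, Matrix.mulVec, dotProduct, Pi.star_apply]
    rw [star_sum]
    apply Finset.sum_congr rfl
    intro i _
    rw [star_mul', hVcreal, hVcsymm j i]
    ring
  have h5 : dotProduct (star x) (Mc.mulVec x) = μ * (S : ℂ) := by
    rw [heig, dotProduct_smul, hdx, smul_eq_mul]
  have hμT : μ * (S : ℂ) = (T : ℂ) := by rw [← h5, hmain, hdy]
  have hSne : (S : ℂ) ≠ 0 := by
    simp only [ne_eq, Complex.ofReal_eq_zero]
    exact hSpos.ne'
  have hμval : μ = ((T / S : ℝ) : ℂ) := by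
    rw [Complex.ofReal_div]
    rw [eq_div_iff hSne]
    exact hμT
  -- |μ| ≤ 1 via max coordinate
  have habs : ‖μ‖ ≤ 1 := by
    obtain ⟨i0, -, hmax⟩ := Finset.exists_max_image Finset.univ
      (fun j => ‖x j‖) Finset.univ_nonempty
    have hxi0 : 0 < ‖x i0‖ := by
      obtain ⟨j0, hj0⟩ := hex
      exact lt_of_lt_of_le (norm_pos_iff.mpr hj0) (hmax j0 (Finset.mem_univ _))
    have hcoord : (Mc.mulVec x) i0 = μ * x i0 := by
      rw [heig, Pi.smul_apply, smul_eq_mul]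
    have hb : ‖(Mc.mulVec x) i0‖ ≤ ‖x i0‖ := by
      simp only [Matrix.mulVec, dotProduct]
      calc ‖∑ j, Mc i0 j * x j‖ ≤ ∑ j, ‖Mc i0 j * x j‖ :=
            norm_sum_le _ _
        _ = ∑ j, W i0 j * ‖x j‖ := by
            apply Finset.sum_congr rfl
            intro j _
            rw [norm_mul]
            congr 1
            rw [hMcdef, Matrix.map_apply, Complex.norm_real, Real.norm_of_nonneg (hWnn i0 j)]
        _ ≤ ∑ j, W i0 j * ‖x i0‖ :=
            Finset.sum_le_sum fun j _ =>
              mul_le_mul_of_nonneg_left (hmax j (Finset.mem_univ _)) (hWnn i0 j)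
        _ = ‖x i0‖ := by rw [← Finset.sum_mul, rowsum i0, one_mul]
    rw [hcoord, norm_mul] at hb
    have h2 : ‖μ‖ * ‖x i0‖ ≤ 1 * ‖x i0‖ := by
      rwa [one_mul]
    exact le_of_mul_le_mul_right h2 hxi0
  have hTS : T / S ≤ 1 := by
    have : ‖((T / S : ℝ) : ℂ)‖ ≤ 1 := hμval ▸ habs
    rw [Complex.norm_real, Real.norm_of_nonneg (div_nonneg hTnn hSpos.le)] at this
    exact this
  refine ⟨?_, ?_, ?_⟩
  · rw [hμval, Complex.ofReal_im]
  · rw [hμval, Complex.ofReal_re]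
    exact div_nonneg hTnn hSpos.le
  · rw [hμval, Complex.ofReal_re]
    exact hTS
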